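/- The closure of the convex hull of F equals the closure of the convex hull of the image P_c(ℝⁿ) = {P_c(x) : x ∈ ℝⁿ}, and both equal the intersection ⋂_{λ ∈ Λ₁} H_λ of the half-spaces H_λ over all λ ∈ Λ₁. -/

import Mathlib

open Matrix Set

noncomputable section

/-- `A` is irreducible: for every nonempty proper subset `α` of the index set,
the submatrix `A[α, αᶜ]` is not the zero matrix. -/
def IsIrred {k : ℕ} (A : Matrix (Fin k) (Fin k) ℝ) : Prop :=
  ∀ α : Finset (Fin k), α.Nonempty → α ≠ Finset.univ → ∃ i ∈ α, ∃ j ∈ αᶜ, A i j ≠ 0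

/-- `A` is a Z-matrix: off-diagonal entries are nonpositive. -/
def IsZmat {k : ℕ} (A : Matrix (Fin k) (Fin k) ℝ) : Prop :=
  ∀ i j, i ≠ j → A i j ≤ 0

/-- `A` is an M-matrix: a Z-matrix all of whose eigenvalues have nonnegative real part. -/
def IsMmat {k : ℕ} (A : Matrix (Fin k) (Fin k) ℝ) : Prop :=
  IsZmat A ∧ ∀ μ ∈ spectrum ℂ (A.map (Complex.ofReal)), 0 ≤ μ.re

/-- `A` is a nonsingular M-matrix: a Z-matrix all of whose eigenvalues have positive real part. -/
def IsNonsingMmat {k : ℕ} (A : Matrix (Fin k) (Fin k) ℝ) : Prop :=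
  IsZmat A ∧ ∀ μ ∈ spectrum ℂ (A.map (Complex.ofReal)), 0 < μ.re

/-- `P_c(x) = [x] Y (V* − x)`. -/
def Pc {k : ℕ} (Y : Matrix (Fin k) (Fin k) ℝ) (Vs : Fin k → ℝ) (x : Fin k → ℝ) : Fin k → ℝ :=
  Matrix.diagonal x *ᵥ (Y *ᵥ (Vs - x))

/-- Jacobian of `P_c` at `x`: `J(x) = [Y(V* − x)] − [x] Y`. -/
def Jmat {k : ℕ} (Y : Matrix (Fin k) (Fin k) ℝ) (Vs : Fin k → ℝ) (x : Fin k → ℝ) :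
    Matrix (Fin k) (Fin k) ℝ :=
  Matrix.diagonal (Y *ᵥ (Vs - x)) - Matrix.diagonal x * Y

/-- long-term voltage stable operating points. -/
def Dset {k : ℕ} (Y : Matrix (Fin k) (Fin k) ℝ) (Vs : Fin k → ℝ) : Set (Fin k → ℝ) :=
  {x | (∀ i, 0 < x i) ∧ IsUnit (Jmat Y Vs x).det ∧ ∀ i j, (Jmat Y Vs x)⁻¹ i j < 0}

/-- feasible power demands. -/
def Fset {k : ℕ} (Y : Matrix (Fin k) (Fin k) ℝ) (Vs : Fin k → ℝ) : Set (Fin k → ℝ) :=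
  {P | ∃ x, (∀ i, 0 < x i) ∧ Pc Y Vs x = P}

/-- `h(λ) = (1/2)([λ] Y + Y [λ])`. -/
def hmat {k : ℕ} (Y : Matrix (Fin k) (Fin k) ℝ) (l : Fin k → ℝ) : Matrix (Fin k) (Fin k) ℝ :=
  (1/2 : ℝ) • (Matrix.diagonal l * Y + Y * Matrix.diagonal l)

/-- `Λ₁ = {λ ∈ Λ : λ > 0, 1ᵀλ = 1}`. -/
def Lam1 {k : ℕ} (Y : Matrix (Fin k) (Fin k) ℝ) : Set (Fin k → ℝ) :=
  {l | (hmat Y l).PosDef ∧ (∀ i, 0 < l i) ∧ ∑ i, l i = 1}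

/-- `φ(λ) = (1/2) h(λ)⁻¹ [λ] I*` where `I* = Y V*`. -/
def phiv {k : ℕ} (Y : Matrix (Fin k) (Fin k) ℝ) (Vs : Fin k → ℝ) (l : Fin k → ℝ) : Fin k → ℝ :=
  (1/2 : ℝ) • ((hmat Y l)⁻¹ *ᵥ (Matrix.diagonal l *ᵥ (Y *ᵥ Vs)))

/-- `‖x‖_{h(λ)}²  = xᵀ h(λ) x`. -/
def qnorm {k : ℕ} (Y : Matrix (Fin k) (Fin k) ℝ) (l x : Fin k → ℝ) : ℝ :=
  x ⬝ᵥ (hmat Y l *ᵥ x)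

/-- The half-space `H_λ`. -/
def Hset {k : ℕ} (Y : Matrix (Fin k) (Fin k) ℝ) (Vs : Fin k → ℝ) (l : Fin k → ℝ) :
    Set (Fin k → ℝ) :=
  {y | l ⬝ᵥ y ≤ qnorm Y l (phiv Y Vs l)}


namespace StmtAux

variable {n : ℕ}


lemma star_vec (x : Fin n → ℝ) : star x = x := by funext i; simp

lemma dot_symm (A : Matrix (Fin n) (Fin n) ℝ) (hA : Aᵀ = A) (x y : Fin n → ℝ) :
    x ⬝ᵥ (A *ᵥ y) = y ⬝ᵥ (A *ᵥ x) := by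
  rw [Matrix.dotProduct_mulVec, ← Matrix.mulVec_transpose, hA, dotProduct_comm]

lemma dot_transpose (A : Matrix (Fin n) (Fin n) ℝ) (x : Fin n → ℝ) :
    x ⬝ᵥ (Aᵀ *ᵥ x) = x ⬝ᵥ (A *ᵥ x) := by
  rw [dotProduct_comm, Matrix.mulVec_transpose, ← Matrix.dotProduct_mulVec]

lemma hmat_transpose (Y : Matrix (Fin n) (Fin n) ℝ) (hY : Yᵀ = Y) (l : Fin n → ℝ) :
    (hmat Y l)ᵀ = hmat Y l := by
  simp [hmat, Matrix.transpose_smul, Matrix.transpose_add, Matrix.transpose_mul,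
    Matrix.diagonal_transpose, hY, add_comm]

lemma hmat_apply (Y : Matrix (Fin n) (Fin n) ℝ) (c : Fin n → ℝ) (i j : Fin n) :
    hmat Y c i j = (1/2) * (c i * Y i j + Y i j * c j) := by
  simp [hmat, Matrix.add_apply, Matrix.diagonal_mul, Matrix.mul_diagonal, Matrix.smul_apply,
    smul_eq_mul]

lemma hmat_herm (Y : Matrix (Fin n) (Fin n) ℝ) (hY : Yᵀ = Y) (l : Fin n → ℝ) :
    (hmat Y l).IsHermitian := by
  have h := hmat_transpose Y hY l
  ext i j
  rw [Matrix.conjTranspose_apply, star_trivial]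
  conv_rhs => rw [← h]
  rw [Matrix.transpose_apply]

lemma qnorm_eq_DY (Y : Matrix (Fin n) (Fin n) ℝ) (hY : Yᵀ = Y) (c x : Fin n → ℝ) :
    qnorm Y c x = x ⬝ᵥ ((Matrix.diagonal c * Y) *ᵥ x) := by
  have h2 : Y * Matrix.diagonal c = (Matrix.diagonal c * Y)ᵀ := by
    rw [Matrix.transpose_mul, Matrix.diagonal_transpose, hY]
  unfold qnorm hmat
  rw [Matrix.smul_mulVec, Matrix.add_mulVec, dotProduct_smul,
    dotProduct_add, h2, dot_transpose]
  simp [smul_eq_mul]; ring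

lemma dot_Pc (Y : Matrix (Fin n) (Fin n) ℝ) (hY : Yᵀ = Y) (Vs c x : Fin n → ℝ) :
    c ⬝ᵥ Pc Y Vs x = x ⬝ᵥ (Matrix.diagonal c *ᵥ (Y *ᵥ Vs)) - qnorm Y c x := by
  unfold Pc
  have hswap : ∀ w : Fin n → ℝ, c ⬝ᵥ (Matrix.diagonal x *ᵥ w) = x ⬝ᵥ (Matrix.diagonal c *ᵥ w) := by
    intro w
    simp only [dotProduct, Matrix.mulVec_diagonal]
    exact Finset.sum_congr rfl fun i _ => by ring
  have hq : x ⬝ᵥ (Matrix.diagonal c *ᵥ (Y *ᵥ x)) = qnorm Y c x := by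
    rw [Matrix.mulVec_mulVec, ← qnorm_eq_DY Y hY]
  rw [hswap, Matrix.mulVec_sub, Matrix.mulVec_sub, dotProduct_sub, hq]

lemma qnorm_add (Y : Matrix (Fin n) (Fin n) ℝ) (hY : Yᵀ = Y) (l x y : Fin n → ℝ) :
    qnorm Y l (x + y) = qnorm Y l x + 2 * (x ⬝ᵥ (hmat Y l *ᵥ y)) + qnorm Y l y := by
  have hsymm := hmat_transpose Y hY l
  unfold qnorm
  rw [Matrix.mulVec_add, dotProduct_add, add_dotProduct, add_dotProduct,
    dot_symm _ hsymm y x]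
  ring

lemma qnorm_smul_x (Y : Matrix (Fin n) (Fin n) ℝ) (l x : Fin n → ℝ) (a : ℝ) :
    qnorm Y l (a • x) = a^2 * qnorm Y l x := by
  unfold qnorm
  rw [Matrix.mulVec_smul, dotProduct_smul, smul_dotProduct]
  simp [smul_eq_mul]; ring

lemma hmat_phiv (Y : Matrix (Fin n) (Fin n) ℝ) (Vs l : Fin n → ℝ) (hl : (hmat Y l).PosDef) :
    hmat Y l *ᵥ phiv Y Vs l = (1/2 : ℝ) • (Matrix.diagonal l *ᵥ (Y *ᵥ Vs)) := by
  unfold phiv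
  rw [Matrix.mulVec_smul, Matrix.mulVec_mulVec,
    Matrix.mul_nonsing_inv _ (isUnit_iff_ne_zero.mpr hl.det_pos.ne'), Matrix.one_mulVec]

lemma dot_Pc_sq (Y : Matrix (Fin n) (Fin n) ℝ) (hY : Yᵀ = Y) (Vs l : Fin n → ℝ)
    (hl : (hmat Y l).PosDef) (x : Fin n → ℝ) :
    l ⬝ᵥ Pc Y Vs x = qnorm Y l (phiv Y Vs l) - qnorm Y l (x - phiv Y Vs l) := by
  set φ := phiv Y Vs l with hφ
  have h1 := dot_Pc Y hY Vs l x
  have h3 : Matrix.diagonal l *ᵥ (Y *ᵥ Vs) = (2:ℝ) • (hmat Y l *ᵥ φ) := by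
    rw [hmat_phiv Y Vs l hl, smul_smul]; norm_num
  have h2 : x ⬝ᵥ (Matrix.diagonal l *ᵥ (Y *ᵥ Vs)) = 2 * (x ⬝ᵥ (hmat Y l *ᵥ φ)) := by
    rw [h3, dotProduct_smul, smul_eq_mul]
  have h4 : qnorm Y l (x - φ) = qnorm Y l x - 2*(x ⬝ᵥ (hmat Y l *ᵥ φ)) + qnorm Y l φ := by
    rw [sub_eq_add_neg, qnorm_add Y hY l x (-φ)]
    have e1 : x ⬝ᵥ (hmat Y l *ᵥ (-φ)) = -(x ⬝ᵥ (hmat Y l *ᵥ φ)) := by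
      rw [Matrix.mulVec_neg, dotProduct_neg]
    have e2 : qnorm Y l (-φ) = qnorm Y l φ := by
      unfold qnorm; rw [Matrix.mulVec_neg, dotProduct_neg, neg_dotProduct, neg_neg]
    rw [e1, e2]; ring
  rw [h1, h2, h4]; ring

lemma Pc_le (Y : Matrix (Fin n) (Fin n) ℝ) (hY : Yᵀ = Y) (Vs l : Fin n → ℝ)
    (hl : (hmat Y l).PosDef) (x : Fin n → ℝ) :
    l ⬝ᵥ Pc Y Vs x ≤ qnorm Y l (phiv Y Vs l) := by
  rw [dot_Pc_sq Y hY Vs l hl x]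
  have h := hl.posSemidef.dotProduct_mulVec_nonneg (x - phiv Y Vs l)
  rw [star_vec] at h
  unfold qnorm; linarith [h]



lemma nonneg_of_Z (M : Matrix (Fin n) (Fin n) ℝ) (hM : M.PosDef)
    (hZm : ∀ i j, i ≠ j → M i j ≤ 0) (x : Fin n → ℝ)
    (hb : ∀ i, 0 ≤ (M *ᵥ x) i) : ∀ i, 0 ≤ x i := by
  by_contra hc
  push_neg at hc
  obtain ⟨i0, hi0⟩ := hc
  set m : Fin n → ℝ := fun i => max (-x i) 0 with hm
  set p : Fin n → ℝ := fun i => max (x i) 0 with hp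
  have hmnn : ∀ i, 0 ≤ m i := fun i => le_max_right _ _
  have hpnn : ∀ i, 0 ≤ p i := fun i => le_max_right _ _
  have hmp : ∀ i, m i * p i = 0 := by
    intro i
    rcases le_total (x i) 0 with h | h
    · have : p i = 0 := max_eq_right h
      rw [this, mul_zero]
    · have : m i = 0 := max_eq_right (by linarith)
      rw [this, zero_mul]
  have hx : x = p - m := by
    funext i
    simp only [Pi.sub_apply, hp, hm]
    rcases le_total (x i) 0 with h | h
    · rw [max_eq_right h, max_eq_left (by linarith)]; ring
    · rw [max_eq_left h, max_eq_right (by linarith)]; ring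
  have hm0 : m ≠ 0 := by
    intro h
    have := congrFun h i0
    simp only [hm, Pi.zero_apply] at this
    have h2 : -x i0 ≤ 0 := by rw [← this]; exact le_max_left _ _
    linarith
  have hdot : 0 ≤ m ⬝ᵥ (M *ᵥ x) :=
    Finset.sum_nonneg fun i _ => mul_nonneg (hmnn i) (hb i)
  have hMV : m ⬝ᵥ (M *ᵥ x) = m ⬝ᵥ (M *ᵥ p) - m ⬝ᵥ (M *ᵥ m) := by
    rw [hx, Matrix.mulVec_sub, dotProduct_sub]
  have h1 : m ⬝ᵥ (M *ᵥ p) ≤ 0 := by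
    have : m ⬝ᵥ (M *ᵥ p) = ∑ i, ∑ j, m i * (M i j * p j) := by
      simp [dotProduct, Matrix.mulVec, Finset.mul_sum]
    rw [this]
    apply Finset.sum_nonpos
    intro i _
    apply Finset.sum_nonpos
    intro j _
    by_cases hij : i = j
    · subst hij
      have : m i * (M i i * p i) = M i i * (m i * p i) := by ring
      rw [this, hmp i, mul_zero]
    · have h3 := hZm i j hij
      nlinarith [mul_nonneg (hmnn i) (hpnn j)]
  have h2 : 0 < m ⬝ᵥ (M *ᵥ m) := by
    have := hM.dotProduct_mulVec_pos hm0
    rwa [star_vec] at this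
  linarith

lemma qnorm_sum (Y : Matrix (Fin n) (Fin n) ℝ) (l v : Fin n → ℝ) :
    qnorm Y l v = ∑ i, ∑ j, v i * (hmat Y l i j * v j) := by
  simp [qnorm, dotProduct, Matrix.mulVec, Finset.mul_sum]

lemma psd_of_copos (Y : Matrix (Fin n) (Fin n) ℝ) (hZ : ∀ i j, i ≠ j → Y i j ≤ 0)
    (c : Fin n → ℝ) (hc : ∀ i, 0 ≤ c i)
    (hcop : ∀ v : Fin n → ℝ, (∀ i, 0 ≤ v i) → 0 ≤ qnorm Y c v) (v : Fin n → ℝ) :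
    0 ≤ qnorm Y c v := by
  have habs := hcop (fun i => |v i|) (fun i => abs_nonneg _)
  have hcomp : qnorm Y c (fun i => |v i|) ≤ qnorm Y c v := by
    rw [qnorm_sum, qnorm_sum]
    apply Finset.sum_le_sum
    intro i _
    apply Finset.sum_le_sum
    intro j _
    by_cases hij : i = j
    · subst hij
      have e : |v i| * (hmat Y c i i * |v i|) = v i * (hmat Y c i i * v i) := by
        linear_combination hmat Y c i i * abs_mul_abs_self (v i)
      exact le_of_eq e
    · have hZij : hmat Y c i j ≤ 0 := by
        rw [hmat_apply]
        have := hZ i j hij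
        nlinarith [hc i, hc j]
      have hprod : v i * v j ≤ |v i| * |v j| := by rw [← abs_mul]; exact le_abs_self _
      nlinarith [hZij, hprod]
  linarith

lemma hmat_shift (Y : Matrix (Fin n) (Fin n) ℝ) (c : Fin n → ℝ) (t : ℝ) :
    hmat Y (c + t • (fun _ => (1:ℝ))) = hmat Y c + t • Y := by
  ext i j
  simp only [hmat, Matrix.add_apply, Matrix.smul_apply, Matrix.diagonal_mul, Matrix.mul_diagonal,
    Pi.add_apply, Pi.smul_apply, smul_eq_mul]
  ring

lemma hmat_smul (Y : Matrix (Fin n) (Fin n) ℝ) (s : ℝ) (l : Fin n → ℝ) :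
    hmat Y (s • l) = s • hmat Y l := by
  ext i j
  simp only [hmat, Matrix.add_apply, Matrix.smul_apply, Matrix.diagonal_mul, Matrix.mul_diagonal,
    Pi.smul_apply, smul_eq_mul]
  ring

lemma qnorm_smul_l (Y : Matrix (Fin n) (Fin n) ℝ) (s : ℝ) (l x : Fin n → ℝ) :
    qnorm Y (s • l) x = s * qnorm Y l x := by
  unfold qnorm
  rw [hmat_smul, Matrix.smul_mulVec, dotProduct_smul, smul_eq_mul]

lemma hmat_one (Y : Matrix (Fin n) (Fin n) ℝ) : hmat Y (fun _ => (1:ℝ)) = Y := by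
  ext i j
  simp only [hmat, Matrix.add_apply, Matrix.smul_apply, Matrix.diagonal_mul, Matrix.mul_diagonal,
    smul_eq_mul]
  ring

lemma c_nonneg (Y : Matrix (Fin n) (Fin n) ℝ) (hPD : Y.PosDef) (c : Fin n → ℝ)
    (hcop : ∀ v : Fin n → ℝ, (∀ i, 0 ≤ v i) → 0 ≤ qnorm Y c v) : ∀ i, 0 ≤ c i := by
  intro i
  have h1 := hcop (Pi.single i 1) (fun j => by
    rcases eq_or_ne j i with h | h
    · subst h; simp
    · simp [Pi.single_apply, h])
  have h2 : qnorm Y c (Pi.single i 1) = c i * Y i i := by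
    unfold qnorm
    rw [Matrix.mulVec_single_one, single_dotProduct, Matrix.col_apply, hmat_apply]
    ring
  have hsne : (Pi.single i 1 : Fin n → ℝ) ≠ 0 := by
    intro h
    have := congrFun h i
    simp at this
  have hY : 0 < Y i i := by
    have h3 := hPD.dotProduct_mulVec_pos hsne
    rw [star_vec, Matrix.mulVec_single_one, single_dotProduct] at h3
    simpa using h3
  nlinarith [h1, h2, hY]

lemma posdef_smul (M : Matrix (Fin n) (Fin n) ℝ) (hM : M.PosDef) (s : ℝ) (hs : 0 < s) :
    (s • M).PosDef := by
  rw [Matrix.posDef_iff_dotProduct_mulVec]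
  constructor
  · rw [Matrix.IsHermitian, Matrix.conjTranspose_smul, star_trivial, hM.1]
  · intro x hx
    rw [star_vec, Matrix.smul_mulVec, dotProduct_smul, smul_eq_mul]
    have := hM.dotProduct_mulVec_pos hx
    rw [star_vec] at this
    exact mul_pos hs this

lemma posdef_shift (Y : Matrix (Fin n) (Fin n) ℝ) (hPD : Y.PosDef) (hY : Yᵀ = Y)
    (c : Fin n → ℝ) (hpsd : ∀ v, 0 ≤ qnorm Y c v) (t : ℝ) (ht : 0 < t) :
    (hmat Y (c + t • (fun _ => (1:ℝ)))).PosDef := by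
  rw [hmat_shift]
  rw [Matrix.posDef_iff_dotProduct_mulVec]
  constructor
  · have h1 : (hmat Y c).IsHermitian := by
      ext i j
      rw [Matrix.conjTranspose_apply, star_trivial, hmat_apply, hmat_apply]
      have : Y j i = Y i j := by
        conv_lhs => rw [← hY]
        rw [Matrix.transpose_apply]
      rw [this]; ring
    have h2 : (t • Y).IsHermitian := by
      rw [Matrix.IsHermitian, Matrix.conjTranspose_smul, star_trivial, hPD.1]
    exact h1.add h2
  · intro x hx
    rw [star_vec, Matrix.add_mulVec, dotProduct_add, Matrix.smul_mulVec,
      dotProduct_smul, smul_eq_mul]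
    have h2 := hpsd x
    have h3 := hPD.dotProduct_mulVec_pos hx
    rw [star_vec] at h3
    unfold qnorm at h2
    nlinarith [mul_pos ht h3]




lemma copos (Y : Matrix (Fin n) (Fin n) ℝ) (hY : Yᵀ = Y) (Vs c : Fin n → ℝ) (b : ℝ)
    (hb : ∀ x : Fin n → ℝ, (∀ i, 0 < x i) → c ⬝ᵥ Pc Y Vs x ≤ b)
    (v : Fin n → ℝ) (hv : ∀ i, 0 ≤ v i) : 0 ≤ qnorm Y c v := by
  by_contra hneg
  push_neg at hneg
  set A := -qnorm Y c v with hA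
  have hA0 : 0 < A := by simp [hA]; linarith
  set one : Fin n → ℝ := fun _ => 1 with hone
  set w := Matrix.diagonal c *ᵥ (Y *ᵥ Vs) with hw
  set C := one ⬝ᵥ w - qnorm Y c one with hC
  set B := v ⬝ᵥ w - 2*(one ⬝ᵥ (hmat Y c *ᵥ v)) with hB
  have key : ∀ t : ℝ, 0 < t → C + B*t + A * t^2 ≤ b := by
    intro t ht
    have hx : ∀ i, 0 < (one + t • v) i := by
      intro i
      have := mul_nonneg ht.le (hv i)
      simp only [Pi.add_apply, Pi.smul_apply, hone, smul_eq_mul]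
      linarith
    have hble := hb (one + t • v) hx
    rw [dot_Pc Y hY Vs c (one + t•v)] at hble
    have e1 : (one + t•v) ⬝ᵥ w = one ⬝ᵥ w + t*(v ⬝ᵥ w) := by
      rw [add_dotProduct, smul_dotProduct, smul_eq_mul]
    have e3 : one ⬝ᵥ (hmat Y c *ᵥ (t•v)) = t * (one ⬝ᵥ (hmat Y c *ᵥ v)) := by
      rw [Matrix.mulVec_smul, dotProduct_smul, smul_eq_mul]
    have e4 : qnorm Y c (t•v) = t^2 * qnorm Y c v := by
      unfold qnorm
      rw [Matrix.mulVec_smul, dotProduct_smul, smul_dotProduct]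
      simp [smul_eq_mul]; ring
    have e2 : qnorm Y c (one + t•v)
        = qnorm Y c one + 2*(t*(one ⬝ᵥ (hmat Y c *ᵥ v))) + t^2 * qnorm Y c v := by
      rw [qnorm_add Y hY c one (t•v), e3, e4]
    rw [e1, e2] at hble
    have hAv : qnorm Y c v = -A := by rw [hA]; ring
    rw [hAv] at hble
    nlinarith [hble]
  set t := max 1 ((|b - C| + |B| + 1)/A) with htdef
  have ht1 : 1 ≤ t := le_max_left _ _
  have ht0 : 0 < t := lt_of_lt_of_le one_pos ht1
  have htA : |b - C| + |B| + 1 ≤ A * t := by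
    have h := le_max_right 1 ((|b - C| + |B| + 1)/A)
    have := (div_le_iff₀ hA0).mp (h.trans_eq rfl)
    calc |b - C| + |B| + 1 ≤ t * A := by
          exact (div_le_iff₀ hA0).mp (le_max_right _ _)
      _ = A * t := by ring
  have hfin := key t ht0
  have k1 : (|b - C| + |B| + 1) * t ≤ (A*t)*t := mul_le_mul_of_nonneg_right htA ht0.le
  have k2 : -|B| ≤ B := neg_abs_le B
  have k3 : b - C ≤ |b - C| := le_abs_self _
  have k4 : (0:ℝ) ≤ (|b - C| + 1) * (t - 1) :=
    mul_nonneg (by positivity) (by linarith)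
  nlinarith [k1, k2, k3, k4, abs_nonneg B, abs_nonneg (b - C), ht1, ht0]

lemma phiv_smul (Y : Matrix (Fin n) (Fin n) ℝ) (Vs l : Fin n → ℝ)
    (hl : (hmat Y l).PosDef) (s : ℝ) (hs : s ≠ 0) :
    phiv Y Vs (s • l) = phiv Y Vs l := by
  unfold phiv
  have hdet : IsUnit (hmat Y l).det := isUnit_iff_ne_zero.mpr hl.det_pos.ne'
  have hinv : (s • hmat Y l)⁻¹ = s⁻¹ • (hmat Y l)⁻¹ := by
    apply Matrix.inv_eq_right_inv
    rw [Matrix.smul_mul, Matrix.mul_smul, smul_smul, Matrix.mul_nonsing_inv _ hdet,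
      mul_inv_cancel₀ hs, one_smul]
  rw [hmat_smul, hinv, Matrix.diagonal_smul, Matrix.smul_mulVec,
    Matrix.smul_mulVec, Matrix.mulVec_smul, smul_smul, smul_smul,
    mul_assoc, inv_mul_cancel₀ hs, mul_one]

lemma Hset_convex (Y : Matrix (Fin n) (Fin n) ℝ) (Vs l : Fin n → ℝ) :
    Convex ℝ (Hset Y Vs l) := by
  exact convex_halfSpace_le
    ⟨fun a b => dotProduct_add l a b, fun r a => dotProduct_smul r l a⟩ _

lemma Hset_closed (Y : Matrix (Fin n) (Fin n) ℝ) (Vs l : Fin n → ℝ) :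
    IsClosed (Hset Y Vs l) := by
  have hcont : Continuous fun y : Fin n → ℝ => l ⬝ᵥ y := by
    unfold dotProduct
    exact continuous_finset_sum _ fun i _ => continuous_const.mul (continuous_apply i)
  exact isClosed_le hcont continuous_const


end StmtAux

open StmtAux in
theorem stmt_12 (n : ℕ) (hn : 1 ≤ n)
    (Y : Matrix (Fin n) (Fin n) ℝ)
    (hPD : Y.PosDef)
    (hZ : IsZmat Y)
    (hirr : IsIrred Y)
    (Vs : Fin n → ℝ) (hVs : ∀ i, 0 < Vs i)
    (hInn : ∀ i, 0 ≤ (Y *ᵥ Vs) i) (hIne : Y *ᵥ Vs ≠ 0) :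
    closure (convexHull ℝ (Fset Y Vs)) = closure (convexHull ℝ (Set.range (Pc Y Vs))) ∧
    closure (convexHull ℝ (Fset Y Vs)) = ⋂ l ∈ Lam1 Y, Hset Y Vs l := by
  haveI : NeZero n := ⟨by omega⟩
  have hYt : Yᵀ = Y := by
    ext i j
    have h := congrFun (congrFun hPD.1 i) j
    rw [Matrix.conjTranspose_apply, star_trivial] at h
    rw [Matrix.transpose_apply]
    exact h
  -- basic subset facts
  have hFr : Fset Y Vs ⊆ Set.range (Pc Y Vs) := by
    rintro P ⟨x, _, rfl⟩
    exact ⟨x, rfl⟩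
  have hrangeH : ∀ l ∈ Lam1 Y, Set.range (Pc Y Vs) ⊆ Hset Y Vs l := by
    rintro l hl P ⟨x, rfl⟩
    exact Pc_le Y hYt Vs l hl.1 x
  have hIconv : Convex ℝ (⋂ l ∈ Lam1 Y, Hset Y Vs l) :=
    convex_iInter fun l => convex_iInter fun _ => Hset_convex Y Vs l
  have hIclosed : IsClosed (⋂ l ∈ Lam1 Y, Hset Y Vs l) :=
    isClosed_iInter fun l => isClosed_iInter fun _ => Hset_closed Y Vs l
  have h2I : closure (convexHull ℝ (Set.range (Pc Y Vs))) ⊆ ⋂ l ∈ Lam1 Y, Hset Y Vs l :=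
    closure_minimal (convexHull_min (Set.subset_iInter₂ fun l hl => hrangeH l hl) hIconv)
      hIclosed
  have h12 : closure (convexHull ℝ (Fset Y Vs)) ⊆ closure (convexHull ℝ (Set.range (Pc Y Vs))) :=
    closure_mono (convexHull_mono hFr)
  -- hmat of ones
  have honePD : (hmat Y (fun _ => (1:ℝ))).PosDef := by rw [hmat_one]; exact hPD
  set M0 := qnorm Y (fun _ => (1:ℝ)) (phiv Y Vs (fun _ => (1:ℝ))) with hM0
  -- hard inclusion
  have hI1 : (⋂ l ∈ Lam1 Y, Hset Y Vs l) ⊆ closure (convexHull ℝ (Fset Y Vs)) := by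
    intro y hy
    by_contra hyn
    obtain ⟨f, u, hfu, huy⟩ := geometric_hahn_banach_closed_point
      ((convex_convexHull ℝ _).closure) isClosed_closure hyn
    set c : Fin n → ℝ := fun i => f (Pi.single i 1) with hc
    have hfc : ∀ z : Fin n → ℝ, f z = c ⬝ᵥ z := by
      intro z
      have hz : ∑ i, z i • (Pi.single i (1:ℝ) : Fin n → ℝ) = z := by
        funext j
        simp [Finset.sum_apply, Pi.single_apply]
      conv_lhs => rw [← hz]
      rw [map_sum]
      unfold dotProduct
      refine Finset.sum_congr rfl fun i _ => ?_
      rw [_root_.map_smul, smul_eq_mul, hc, mul_comm]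
    have hbc : ∀ x : Fin n → ℝ, (∀ i, 0 < x i) → c ⬝ᵥ Pc Y Vs x ≤ u := by
      intro x hx
      have hmem : Pc Y Vs x ∈ convexHull ℝ (Fset Y Vs) :=
        subset_convexHull ℝ _ ⟨x, hx, rfl⟩
      have := hfu _ (subset_closure hmem)
      rw [hfc] at this
      exact this.le
    have hcy : u < c ⬝ᵥ y := by rw [← hfc]; exact huy
    have hcop : ∀ v : Fin n → ℝ, (∀ i, 0 ≤ v i) → 0 ≤ qnorm Y c v :=
      fun v hv => copos Y hYt Vs c u hbc v hv
    have hcnn : ∀ i, 0 ≤ c i := c_nonneg Y hPD c hcop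
    have hpsd : ∀ v, 0 ≤ qnorm Y c v := psd_of_copos Y hZ c hcnn hcop
    set Sy := (fun _ => (1:ℝ)) ⬝ᵥ y with hSy
    set β := c ⬝ᵥ y - u with hβ
    have hβ0 : 0 < β := by simp only [hβ]; linarith
    set t := min 1 (β / (|M0 - Sy| + 1)) with ht
    have ht0 : 0 < t := lt_min one_pos (div_pos hβ0 (by positivity))
    have ht1 : t ≤ 1 := min_le_left _ _
    have ht2 : t ≤ β / (|M0 - Sy| + 1) := min_le_right _ _
    set lam := c + t • (fun _ => (1:ℝ)) with hlam
    have hlampos : ∀ i, 0 < lam i := by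
      intro i
      simp only [hlam, Pi.add_apply, Pi.smul_apply, smul_eq_mul, mul_one]
      linarith [hcnn i]
    have hlamPD : (hmat Y lam).PosDef := posdef_shift Y hPD hYt c hpsd t ht0
    set φ := phiv Y Vs lam with hφ
    have hφnn : ∀ i, 0 ≤ φ i := by
      apply nonneg_of_Z (hmat Y lam) hlamPD
      · intro i j hij
        rw [hmat_apply]
        have h1 := hZ i j hij
        nlinarith [(hlampos i).le, (hlampos j).le]
      · intro i
        rw [hmat_phiv Y Vs lam hlamPD]
        simp only [Pi.smul_apply, Matrix.mulVec_diagonal, smul_eq_mul]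
        have := hInn i
        have := (hlampos i).le
        positivity
    have hqbound : qnorm Y lam φ ≤ u + t * M0 := by
      have hstep : ∀ ε : ℝ, 0 < ε →
          qnorm Y lam φ ≤ u + t*M0 + ε^2 * qnorm Y lam (fun _ => (1:ℝ)) := by
        intro ε hε
        set xε := φ + ε • (fun _ => (1:ℝ)) with hxε
        have hxpos : ∀ i, 0 < xε i := by
          intro i
          simp only [hxε, Pi.add_apply, Pi.smul_apply, smul_eq_mul, mul_one]
          linarith [hφnn i]
        have h1 : lam ⬝ᵥ Pc Y Vs xε = qnorm Y lam φ - qnorm Y lam (xε - φ) :=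
          dot_Pc_sq Y hYt Vs lam hlamPD xε
        have h2 : xε - φ = ε • (fun _ => (1:ℝ)) := by
          simp only [hxε]
          abel
        have h3 : qnorm Y lam (ε • (fun _ => (1:ℝ))) = ε^2 * qnorm Y lam (fun _ => (1:ℝ)) :=
          qnorm_smul_x Y lam _ ε
        have h4 : lam ⬝ᵥ Pc Y Vs xε
            = c ⬝ᵥ Pc Y Vs xε + t * ((fun _ => (1:ℝ)) ⬝ᵥ Pc Y Vs xε) := by
          rw [hlam, add_dotProduct, smul_dotProduct, smul_eq_mul]
        have h5 : c ⬝ᵥ Pc Y Vs xε ≤ u := hbc _ hxpos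
        have h6 : (fun _ => (1:ℝ)) ⬝ᵥ Pc Y Vs xε ≤ M0 := Pc_le Y hYt Vs _ honePD _
        have h7 : t * ((fun _ => (1:ℝ)) ⬝ᵥ Pc Y Vs xε) ≤ t * M0 :=
          mul_le_mul_of_nonneg_left h6 ht0.le
        rw [h2, h3] at h1
        linarith [h1, h4, h5, h7]
      set K := qnorm Y lam (fun _ => (1:ℝ)) with hK
      have hK0 : 0 ≤ K := by
        have := hlamPD.posSemidef.dotProduct_mulVec_nonneg (fun _ => (1:ℝ))
        rwa [star_vec] at this
      by_contra hcon
      push_neg at hcon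
      set δ := qnorm Y lam φ - (u + t*M0) with hδ
      have hδ0 : 0 < δ := by simp only [hδ]; linarith
      set ε := min 1 (δ/(2*(K+1))) with hε
      have hε0 : 0 < ε := lt_min one_pos (by positivity)
      have hε1 : ε ≤ 1 := min_le_left _ _
      have hε2 : ε ≤ δ/(2*(K+1)) := min_le_right _ _
      have := hstep ε hε0
      have hk1 : ε^2 * K ≤ ε * K := by nlinarith [hε0, hε1, hK0]
      have hk2 : ε * K ≤ (δ/(2*(K+1))) * K := mul_le_mul_of_nonneg_right hε2 hK0
      have hk3 : (δ/(2*(K+1))) * K < δ := by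
        rw [div_mul_eq_mul_div, div_lt_iff₀ (by positivity)]
        nlinarith [hδ0, hK0]
      simp only [hδ] at hk3
      linarith
    -- normalization
    have hsum : 0 < ∑ i, lam i := by
      apply Finset.sum_pos (fun i _ => hlampos i)
      exact Finset.univ_nonempty
    set s := (∑ i, lam i)⁻¹ with hs
    have hs0 : 0 < s := inv_pos.mpr hsum
    set lam' := s • lam with hlam'
    have hlam'mem : lam' ∈ Lam1 Y := by
      refine ⟨?_, fun i => ?_, ?_⟩
      · rw [hlam', hmat_smul]
        exact posdef_smul _ hlamPD s hs0
      · simp only [hlam', Pi.smul_apply, smul_eq_mul]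
        exact mul_pos hs0 (hlampos i)
      · simp only [hlam', Pi.smul_apply, smul_eq_mul]
        rw [← Finset.mul_sum, hs, inv_mul_cancel₀ hsum.ne']
    have hymem : y ∈ Hset Y Vs lam' := by
      rw [Set.mem_iInter₂] at hy
      exact hy lam' hlam'mem
    have hphi' : phiv Y Vs lam' = φ := phiv_smul Y Vs lam hlamPD s hs0.ne'
    have hq' : qnorm Y lam' φ = s * qnorm Y lam φ := qnorm_smul_l Y s lam φ
    have hdy : lam' ⬝ᵥ y = s * (lam ⬝ᵥ y) := by
      rw [hlam', smul_dotProduct, smul_eq_mul]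
    have hly : lam ⬝ᵥ y = c ⬝ᵥ y + t * Sy := by
      rw [hlam, add_dotProduct, smul_dotProduct, smul_eq_mul, hSy]
    have hmain : qnorm Y lam φ < lam ⬝ᵥ y := by
      rw [hly]
      have habs1 : t*(M0 - Sy) ≤ t * |M0 - Sy| :=
        mul_le_mul_of_nonneg_left (le_abs_self _) ht0.le
      have habs2 : t * |M0-Sy| ≤ (β / (|M0-Sy|+1)) * |M0-Sy| :=
        mul_le_mul_of_nonneg_right ht2 (abs_nonneg _)
      have hlt : (β/(|M0-Sy|+1)) * |M0-Sy| < β := by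
        rw [div_mul_eq_mul_div, div_lt_iff₀ (by positivity)]
        nlinarith [abs_nonneg (M0-Sy), hβ0]
      have : t * (M0 - Sy) < β := by linarith
      simp only [hβ] at this
      linarith [hqbound]
    have hHmem : lam' ⬝ᵥ y ≤ qnorm Y lam' (phiv Y Vs lam') := hymem
    rw [hphi', hq', hdy] at hHmem
    have := mul_lt_mul_of_pos_left hmain hs0
    linarith
  constructor
  · exact Subset.antisymm h12 (h2I.trans hI1)
  · exact Subset.antisymm (h12.trans h2I) hI1
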